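/- arXiv:1804.01291 — 5 statements merged into one kernel-verified Lean document; each statement's English description precedes it below -/
import Mathlib

section
/- The matrix exponential of the bond term of the spin Hamiltonian H₁ over half a driving period is, up to the global phase −i, the SWAP gate: Matrix.exp(−I·(π/4)·(I₄ + σx⊗σx + σy⊗σy + σz⊗σz)) = −I · SWAP. -/
open Matrix Kronecker Complex

attribute [local instance] Matrix.linftyOpNormedRing Matrix.linftyOpNormedAlgebra

set_option maxHeartbeats 1000000 in
open NormedSpace in
lemma exp_smul_idem {𝔸 : Type*} [NormedRing 𝔸] [NormedAlgebra ℂ 𝔸] [CompleteSpace 𝔸]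
    (P : 𝔸) (hP : P * P = P) (a : ℂ) :
    exp (a • P) = 1 + (Complex.exp a - 1) • P := by
  have hPn : ∀ n : ℕ, P ^ (n + 1) = P := by
    intro n; induction n with
    | zero => simp
    | succ k ih => rw [pow_succ, ih, hP]
  have hsum : Summable fun n : ℕ => ((Nat.factorial n : ℂ)⁻¹) • (a • P) ^ n :=
    expSeries_summable' (𝕂 := ℂ) (a • P)
  have hsc : Summable fun n : ℕ => ((Nat.factorial n : ℂ)⁻¹) * a ^ n := by
    simpa [smul_eq_mul] using expSeries_summable' (𝕂 := ℂ) a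
  have hsc' : Summable fun n : ℕ => ((Nat.factorial (n + 1) : ℂ)⁻¹) * a ^ (n + 1) :=
    (summable_nat_add_iff 1).2 hsc
  have hscalar : ∑' n : ℕ, ((Nat.factorial (n + 1) : ℂ)⁻¹) * a ^ (n + 1) = Complex.exp a - 1 := by
    have h := (hsc.tsum_eq_zero_add).symm
    simp only [pow_zero, Nat.factorial_zero, Nat.cast_one, inv_one, one_mul] at h
    have he : Complex.exp a = ∑' n : ℕ, ((Nat.factorial n : ℂ)⁻¹) * a ^ n := by
      rw [Complex.exp_eq_exp_ℂ, exp_eq_tsum (𝕂 := ℂ)]; simp [smul_eq_mul]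
    rw [he]; linear_combination h
  have key : exp (a • P) = ∑' n : ℕ, ((Nat.factorial n : ℂ)⁻¹) • (a • P) ^ n := by
    rw [exp_eq_tsum (𝕂 := ℂ)]
  rw [key, hsum.tsum_eq_zero_add]
  simp only [pow_zero, Nat.factorial_zero, Nat.cast_one, inv_one, one_smul]
  congr 1
  have : ∀ n : ℕ, ((Nat.factorial (n + 1) : ℂ)⁻¹) • (a • P) ^ (n + 1)
      = (((Nat.factorial (n + 1) : ℂ)⁻¹) * a ^ (n + 1)) • P := by
    intro n
    rw [smul_pow, hPn, smul_smul]
  simp_rw [this]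
  rw [hsc'.tsum_smul_const, hscalar]

/-- The 2×2 Pauli matrices. -/
noncomputable def sigmaX : Matrix (Fin 2) (Fin 2) ℂ := !![0, 1; 1, 0]
noncomputable def sigmaY : Matrix (Fin 2) (Fin 2) ℂ := !![0, -I; I, 0]
noncomputable def sigmaZ : Matrix (Fin 2) (Fin 2) ℂ := !![1, 0; 0, -1]

/-- The SWAP gate: the permutation matrix of `(a,b) ↦ (b,a)` on `Fin 2 × Fin 2`,
so that `SWAP · e_{(a,b)} = e_{(b,a)}`. -/
noncomputable def swapGate : Matrix (Fin 2 × Fin 2) (Fin 2 × Fin 2) ℂ :=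
  Matrix.of fun i j => if i = (j.2, j.1) then 1 else 0

lemma hM : (1 : Matrix (Fin 2 × Fin 2) (Fin 2 × Fin 2) ℂ)
    + sigmaX ⊗ₖ sigmaX + sigmaY ⊗ₖ sigmaY + sigmaZ ⊗ₖ sigmaZ = (2:ℂ) • swapGate := by
  ext ⟨i, j⟩ ⟨k, l⟩
  fin_cases i <;> fin_cases j <;> fin_cases k <;> fin_cases l <;>
    simp [sigmaX, sigmaY, sigmaZ, swapGate, Matrix.one_apply, kroneckerMap_apply,
      Prod.ext_iff] <;> ring

lemma hS : swapGate * swapGate = 1 := by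
  ext ⟨i, j⟩ ⟨k, l⟩
  simp only [Matrix.mul_apply, Fintype.sum_prod_type, Fin.sum_univ_two, swapGate,
    Matrix.of_apply, Matrix.one_apply, Prod.ext_iff]
  fin_cases i <;> fin_cases j <;> fin_cases k <;> fin_cases l <;> simp

/-- The half-period time evolution `e^{-i H₁ τ/2}` of one bond term
`(π/(2τ))(1 + σ⃗_{i,A}·σ⃗_{i,B})` of the spin model is the SWAP gate, up to the
global phase `-i`. -/
theorem exp_bond_term_eq_neg_I_smul_swap :
    NormedSpace.exp
        ((-I * (Real.pi / 4 : ℝ)) •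
          ((1 : Matrix (Fin 2 × Fin 2) (Fin 2 × Fin 2) ℂ)
            + sigmaX ⊗ₖ sigmaX + sigmaY ⊗ₖ sigmaY + sigmaZ ⊗ₖ sigmaZ))
      = (-I) • swapGate := by
  set S := swapGate with hSdef
  set P : Matrix (Fin 2 × Fin 2) (Fin 2 × Fin 2) ℂ := (2:ℂ)⁻¹ • (1 + S) with hPdef
  have hP : P * P = P := by
    have h1 : (1 + S) * (1 + S) = (2:ℂ) • (1 + S) := by
      have h2 : S * S = 1 := hS
      rw [mul_add, add_mul, add_mul, one_mul, one_mul, mul_one, h2, two_smul]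
      abel
    rw [hPdef, smul_mul_smul_comm, h1, smul_smul]
    norm_num
  have hc : ((Real.pi / 4 : ℝ) : ℂ) = (Real.pi : ℂ) / 4 := by push_cast; ring
  have harg : (-I * (Real.pi / 4 : ℝ)) •
      ((1 : Matrix (Fin 2 × Fin 2) (Fin 2 × Fin 2) ℂ)
        + sigmaX ⊗ₖ sigmaX + sigmaY ⊗ₖ sigmaY + sigmaZ ⊗ₖ sigmaZ)
      = (-((Real.pi : ℂ) * I)) • P + (((Real.pi : ℂ) / 2) * I) • (1 : Matrix (Fin 2 × Fin 2) (Fin 2 × Fin 2) ℂ) := by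
    rw [hM, hc, hPdef]
    match_scalars <;> ring
  rw [harg]
  have hcomm : Commute ((-((Real.pi : ℂ) * I)) • P)
      ((((Real.pi : ℂ) / 2) * I) • (1 : Matrix (Fin 2 × Fin 2) (Fin 2 × Fin 2) ℂ)) :=
    ((Commute.one_right _).smul_right _).smul_left _
  rw [Matrix.exp_add_of_commute _ _ hcomm]
  erw [exp_smul_idem P hP, exp_smul_idem 1 (one_mul 1)]
  have e1 : Complex.exp (-((Real.pi : ℂ) * I)) = -1 := by
    rw [Complex.exp_neg, Complex.exp_pi_mul_I]; norm_num
  have e2 : Complex.exp (((Real.pi : ℂ) / 2) * I) = I := by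
    rw [Complex.exp_mul_I]
    have : ((Real.pi : ℂ) / 2) = ((Real.pi / 2 : ℝ) : ℂ) := by push_cast; ring
    rw [this, ← Complex.ofReal_cos, ← Complex.ofReal_sin, Real.cos_pi_div_two, Real.sin_pi_div_two]
    simp
  rw [e1, e2, mul_add, mul_one, mul_smul_comm, mul_one, hPdef]
  match_scalars <;> ring
end

section
/- The mean-field self-consistent equation at half filling: let M be a positive integer, let the sites be indexed by i ∈ {1,…,2M}, with odd sites those of odd index, and for an M-element subset S of the sites let k(S) = |S ∩ {odd sites}| and σ̃ᵢ(S) = (−1)^{i−1}·(2·𝟙[i ∈ S] − 1). Then for every real c and every site i, (Σ_{S : |S| = M} σ̃ᵢ(S)·exp(c·k(S))) / (Σ_{S : |S| = M} exp(c·k(S))) = (1/(2M)) · (Σ_{n=0}^{M} (4n − 2M)·C(M,n)²·exp(c·n)) / (Σ_{n=0}^{M} C(M,n)²·exp(c·n)); in particular the left-hand side is independent of the site i. -/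
open Finset

private lemma union_inter_left' {X Y T U : Finset ℕ} (h : Disjoint X Y)
    (hT : T ⊆ X) (hU : U ⊆ Y) : (T ∪ U) ∩ X = T := by
  rw [Finset.union_inter_distrib_right, Finset.inter_eq_left.mpr hT,
    Finset.disjoint_iff_inter_eq_empty.mp ((h.symm.mono_left hU).mono_right (le_refl X)),
    Finset.union_empty]

private lemma sum_powersetCard_union_split {X Y : Finset ℕ} (h : Disjoint X Y) (m : ℕ)
    (g : Finset ℕ → ℝ) :
    ∑ S ∈ (X ∪ Y).powersetCard m, g S
      = ∑ n ∈ Finset.range (m + 1), ∑ T ∈ X.powersetCard n, ∑ U ∈ Y.powersetCard (m - n),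
          g (T ∪ U) := by
  have hmaps : ∀ S ∈ (X ∪ Y).powersetCard m, (S ∩ X).card ∈ Finset.range (m + 1) := by
    intro S hS
    rw [Finset.mem_powersetCard] at hS
    rw [Finset.mem_range, Nat.lt_succ_iff, ← hS.2]
    exact Finset.card_le_card (Finset.inter_subset_left)
  rw [← Finset.sum_fiberwise_of_maps_to hmaps]
  refine Finset.sum_congr rfl fun n hn => ?_
  have hnm : n ≤ m := Nat.lt_succ_iff.mp (Finset.mem_range.mp hn)
  rw [← Finset.sum_product' (s := X.powersetCard n) (t := Y.powersetCard (m - n))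
      (f := fun T U => g (T ∪ U))]
  refine Finset.sum_nbij' (i := fun S => (S ∩ X, S ∩ Y)) (j := fun p => p.1 ∪ p.2)
    ?_ ?_ ?_ ?_ ?_
  · intro S hS
    simp only [Finset.mem_filter, Finset.mem_powersetCard] at hS
    obtain ⟨⟨hsub, hcard⟩, hk⟩ := hS
    have hunion : (S ∩ X) ∪ (S ∩ Y) = S := by
      rw [← Finset.inter_union_distrib_left, Finset.inter_eq_left.mpr hsub]
    have hdisj : Disjoint (S ∩ X) (S ∩ Y) :=
      h.mono Finset.inter_subset_right Finset.inter_subset_right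
    have hcards : (S ∩ X).card + (S ∩ Y).card = m := by
      rw [← Finset.card_union_of_disjoint hdisj, hunion, hcard]
    simp only [Finset.mem_product, Finset.mem_powersetCard]
    exact ⟨⟨Finset.inter_subset_right, hk⟩, Finset.inter_subset_right, by omega⟩
  · intro p hp
    simp only [Finset.mem_product, Finset.mem_powersetCard] at hp
    obtain ⟨⟨hT, hTc⟩, hU, hUc⟩ := hp
    have hdisj : Disjoint p.1 p.2 := h.mono hT hU
    simp only [Finset.mem_filter, Finset.mem_powersetCard]
    refine ⟨⟨Finset.union_subset (hT.trans Finset.subset_union_left)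
      (hU.trans Finset.subset_union_right), ?_⟩, ?_⟩
    · rw [Finset.card_union_of_disjoint hdisj, hTc, hUc]; omega
    · rw [union_inter_left' h hT hU, hTc]
  · intro S hS
    simp only [Finset.mem_filter, Finset.mem_powersetCard] at hS
    show (S ∩ X) ∪ (S ∩ Y) = S
    rw [← Finset.inter_union_distrib_left, Finset.inter_eq_left.mpr hS.1.1]
  · intro p hp
    simp only [Finset.mem_product, Finset.mem_powersetCard] at hp
    obtain ⟨⟨hT, hTc⟩, hU, hUc⟩ := hp
    have h1 := union_inter_left' h hT hU
    have h2 : (p.1 ∪ p.2) ∩ Y = p.2 := by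
      rw [Finset.union_comm]; exact union_inter_left' h.symm hU hT
    ext1 <;> assumption
  · intro S hS
    simp only [Finset.mem_filter, Finset.mem_powersetCard] at hS
    show g S = g ((S ∩ X) ∪ (S ∩ Y))
    rw [← Finset.inter_union_distrib_left, Finset.inter_eq_left.mpr hS.1.1]

private lemma card_filter_not_mem_powersetCard (X : Finset ℕ) (i n : ℕ) (hi : i ∈ X) :
    ((X.powersetCard n).filter (fun T => i ∉ T)).card = (X.card - 1).choose n := by
  have he : (X.powersetCard n).filter (fun T => i ∉ T) = (X.erase i).powersetCard n := by
    ext T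
    simp only [Finset.mem_filter, Finset.mem_powersetCard, Finset.subset_erase]
    tauto
  rw [he, Finset.card_powersetCard, Finset.card_erase_of_mem hi]

private lemma sum_indicator_powersetCard (X : Finset ℕ) (n i : ℕ) (hi : i ∈ X) :
    ∑ T ∈ X.powersetCard n, (2 * (if i ∈ T then (1 : ℝ) else 0) - 1)
      = 2 * ((X.card.choose n : ℝ) - ((X.card - 1).choose n : ℝ)) - (X.card.choose n : ℝ) := by
  have h1 : ((X.powersetCard n).filter (fun T => i ∈ T)).card
      + ((X.powersetCard n).filter (fun T => ¬ i ∈ T)).card = X.card.choose n := by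
    rw [Finset.card_filter_add_card_filter_not, Finset.card_powersetCard]
  have h2 := card_filter_not_mem_powersetCard X i n hi
  rw [Finset.sum_sub_distrib, Finset.sum_const, ← Finset.mul_sum, Finset.sum_boole,
    Finset.card_powersetCard, nsmul_eq_mul, mul_one]
  have h1' : (((X.powersetCard n).filter (fun T => i ∈ T)).card : ℝ)
      + (((X.powersetCard n).filter (fun T => ¬ i ∈ T)).card : ℝ) = (X.card.choose n : ℝ) := by
    exact_mod_cast congrArg (Nat.cast : ℕ → ℝ) h1
  have h2' : (((X.powersetCard n).filter (fun T => ¬ i ∈ T)).card : ℝ)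
      = (((X.card - 1).choose n : ℕ) : ℝ) := by exact_mod_cast congrArg (Nat.cast : ℕ → ℝ) h2
  linarith

private lemma card_odd_filter (M : ℕ) :
    (((Finset.Icc 1 (2 * M)).filter (fun j => Odd j)).card) = M := by
  have him : Finset.image (fun k => 2 * k + 1) (Finset.range M)
      = (Finset.Icc 1 (2 * M)).filter (fun j => Odd j) := by
    ext a
    simp only [Finset.mem_image, Finset.mem_range, Finset.mem_filter, Finset.mem_Icc,
      Nat.odd_iff]
    constructor
    · rintro ⟨k, hk, rfl⟩; omega
    · rintro ⟨⟨h1, h2⟩, h3⟩; exact ⟨(a - 1) / 2, by omega, by omega⟩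
  rw [← him, Finset.card_image_of_injective _ (fun a b h => by omega), Finset.card_range]

private lemma card_even_filter (M : ℕ) :
    (((Finset.Icc 1 (2 * M)).filter (fun j => ¬ Odd j)).card) = M := by
  have h1 := Finset.card_filter_add_card_filter_not
    (s := Finset.Icc 1 (2 * M)) (p := fun j => Odd j)
  rw [card_odd_filter, Nat.card_Icc] at h1
  omega

private lemma nat_id1 (M n : ℕ) (hM : 0 < M) :
    (M - n) * M.choose n = M * (M - 1).choose n := by
  have h := Nat.choose_mul_succ_eq (M - 1) n
  have hM1 : M - 1 + 1 = M := by omega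
  rw [hM1] at h
  rw [Nat.mul_comm, ← h]; ring

private lemma nat_id2 (M n : ℕ) (hM : 0 < M) (hn : n ≤ M) :
    M * (M - 1).choose (M - n) = n * M.choose n := by
  rcases Nat.eq_zero_or_pos n with rfl | hn0
  · rw [Nat.choose_eq_zero_of_lt (by omega)]; ring_nf
  · have hsym : (M - 1).choose (M - n) = (M - 1).choose (n - 1) := by
      have : M - n = (M - 1) - (n - 1) := by omega
      rw [this, Nat.choose_symm (by omega)]
    have h := Nat.add_one_mul_choose_eq (M - 1) (n - 1)
    have hM1 : M - 1 + 1 = M := by omega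
    have hn1 : n - 1 + 1 = n := by omega
    rw [hM1, hn1] at h
    rw [hsym, h]; ring
/-- The mean-field self-consistent equation at half filling: with sites `{1,…,2M}`,
staggered occupation `σ̃ᵢ(S) = (−1)^{i−1}(2·𝟙[i ∈ S] − 1)`, the number of occupied odd
sites `k(S) = |S ∩ {odd sites}|`, and Boltzmann weight `exp(c·k(S))`, the thermal average
of `σ̃ᵢ` over half-filled configurations equals
`(1/(2M))·(Σₙ (4n − 2M)·C(M,n)²·e^{cn}) / (Σₙ C(M,n)²·e^{cn})` for every site `i`;
in particular it is independent of `i`. -/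
theorem mean_field_self_consistent_equation (M : ℕ) (hM : 0 < M) (c : ℝ)
    (i : ℕ) (hi : i ∈ Finset.Icc 1 (2 * M)) :
    (∑ S ∈ (Finset.Icc 1 (2 * M)).powersetCard M,
        ((-1 : ℝ)) ^ (i - 1) * (2 * (if i ∈ S then (1 : ℝ) else 0) - 1) *
          Real.exp (c * ((S.filter (fun j => Odd j)).card : ℝ)))
      / (∑ S ∈ (Finset.Icc 1 (2 * M)).powersetCard M,
          Real.exp (c * ((S.filter (fun j => Odd j)).card : ℝ)))
    = (1 / (2 * M : ℝ)) *
        ((∑ n ∈ Finset.range (M + 1),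
            ((4 * n : ℝ) - 2 * M) * (M.choose n : ℝ) ^ 2 * Real.exp (c * n))
          / (∑ n ∈ Finset.range (M + 1), (M.choose n : ℝ) ^ 2 * Real.exp (c * n))) := by
  have hOE : ((Finset.Icc 1 (2 * M)).filter (fun j => Odd j))
      ∪ ((Finset.Icc 1 (2 * M)).filter (fun j => ¬ Odd j)) = Finset.Icc 1 (2 * M) :=
    Finset.filter_union_filter_not_eq _ _
  have hdisj : Disjoint ((Finset.Icc 1 (2 * M)).filter (fun j => Odd j))
      ((Finset.Icc 1 (2 * M)).filter (fun j => ¬ Odd j)) :=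
    Finset.disjoint_filter_filter_not _ _ _
  have hOcard := card_odd_filter M
  have hEcard := card_even_filter M
  have hfilter : ∀ T U : Finset ℕ, T ⊆ (Finset.Icc 1 (2 * M)).filter (fun j => Odd j) →
      U ⊆ (Finset.Icc 1 (2 * M)).filter (fun j => ¬ Odd j) →
      (T ∪ U).filter (fun j => Odd j) = T := by
    intro T U hT hU
    rw [Finset.filter_union,
      Finset.filter_true_of_mem (fun j hj => (Finset.mem_filter.mp (hT hj)).2),
      Finset.filter_false_of_mem (fun j hj => (Finset.mem_filter.mp (hU hj)).2),
      Finset.union_empty]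
  have h2M : (2 * (M : ℝ)) ≠ 0 := by positivity
  have hden : (∑ S ∈ (Finset.Icc 1 (2 * M)).powersetCard M,
          Real.exp (c * ((S.filter (fun j => Odd j)).card : ℝ)))
      = ∑ n ∈ Finset.range (M + 1), (M.choose n : ℝ) ^ 2 * Real.exp (c * n) := by
    rw [← hOE, sum_powersetCard_union_split hdisj]
    refine Finset.sum_congr rfl fun n hn => ?_
    have hn' : n ≤ M := Nat.lt_succ_iff.mp (Finset.mem_range.mp hn)
    calc ∑ T ∈ ((Finset.Icc 1 (2 * M)).filter (fun j => Odd j)).powersetCard n,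
          ∑ U ∈ ((Finset.Icc 1 (2 * M)).filter (fun j => ¬ Odd j)).powersetCard (M - n),
            Real.exp (c * (((T ∪ U).filter (fun j => Odd j)).card : ℝ))
        = ∑ T ∈ ((Finset.Icc 1 (2 * M)).filter (fun j => Odd j)).powersetCard n,
          ∑ _U ∈ ((Finset.Icc 1 (2 * M)).filter (fun j => ¬ Odd j)).powersetCard (M - n),
            Real.exp (c * n) := by
          refine Finset.sum_congr rfl fun T hT => Finset.sum_congr rfl fun U hU => ?_
          rw [hfilter T U (Finset.mem_powersetCard.mp hT).1 (Finset.mem_powersetCard.mp hU).1,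
            (Finset.mem_powersetCard.mp hT).2]
      _ = (M.choose n : ℝ) ^ 2 * Real.exp (c * n) := by
          rw [Finset.sum_const, Finset.sum_const, Finset.card_powersetCard,
            Finset.card_powersetCard, hOcard, hEcard, Nat.choose_symm hn',
            nsmul_eq_mul, nsmul_eq_mul]
          ring
  have hnum : (∑ S ∈ (Finset.Icc 1 (2 * M)).powersetCard M,
        ((-1 : ℝ)) ^ (i - 1) * (2 * (if i ∈ S then (1 : ℝ) else 0) - 1) *
          Real.exp (c * ((S.filter (fun j => Odd j)).card : ℝ)))
      = (1 / (2 * M : ℝ)) * ∑ n ∈ Finset.range (M + 1),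
          ((4 * n : ℝ) - 2 * M) * (M.choose n : ℝ) ^ 2 * Real.exp (c * n) := by
    rw [← hOE, sum_powersetCard_union_split hdisj, Finset.mul_sum]
    refine Finset.sum_congr rfl fun n hn => ?_
    have hn' : n ≤ M := Nat.lt_succ_iff.mp (Finset.mem_range.mp hn)
    by_cases hodd : Odd i
    · have hiO : i ∈ (Finset.Icc 1 (2 * M)).filter (fun j => Odd j) :=
        Finset.mem_filter.mpr ⟨hi, hodd⟩
      have hsign : (-1 : ℝ) ^ (i - 1) = 1 := by
        obtain ⟨k, rfl⟩ := hodd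
        have h' : 2 * k + 1 - 1 = 2 * k := by omega
        rw [h']; exact Even.neg_one_pow ⟨k, by ring⟩
      have hid : ((M : ℝ) - n) * (M.choose n : ℝ) = (M : ℝ) * (((M - 1).choose n : ℕ) : ℝ) := by
        have h := congrArg (Nat.cast : ℕ → ℝ) (nat_id1 M n hM)
        rw [Nat.cast_mul, Nat.cast_mul, Nat.cast_sub hn'] at h
        exact h
      calc ∑ T ∈ ((Finset.Icc 1 (2 * M)).filter (fun j => Odd j)).powersetCard n,
            ∑ U ∈ ((Finset.Icc 1 (2 * M)).filter (fun j => ¬ Odd j)).powersetCard (M - n),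
              ((-1 : ℝ)) ^ (i - 1) * (2 * (if i ∈ T ∪ U then (1 : ℝ) else 0) - 1) *
                Real.exp (c * (((T ∪ U).filter (fun j => Odd j)).card : ℝ))
          = ∑ T ∈ ((Finset.Icc 1 (2 * M)).filter (fun j => Odd j)).powersetCard n,
            ∑ _U ∈ ((Finset.Icc 1 (2 * M)).filter (fun j => ¬ Odd j)).powersetCard (M - n),
              (2 * (if i ∈ T then (1 : ℝ) else 0) - 1) * Real.exp (c * n) := by
            refine Finset.sum_congr rfl fun T hT => Finset.sum_congr rfl fun U hU => ?_
            obtain ⟨hTsub, hTcard⟩ := Finset.mem_powersetCard.mp hT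
            obtain ⟨hUsub, hUcard⟩ := Finset.mem_powersetCard.mp hU
            have hiU : i ∉ U := fun h => (Finset.mem_filter.mp (hUsub h)).2 hodd
            rw [hfilter T U hTsub hUsub, hTcard, hsign, one_mul]
            simp [Finset.mem_union, hiU]
        _ = (∑ T ∈ ((Finset.Icc 1 (2 * M)).filter (fun j => Odd j)).powersetCard n,
              (2 * (if i ∈ T then (1 : ℝ) else 0) - 1)) *
              ((M.choose (M - n) : ℝ) * Real.exp (c * n)) := by
            simp only [Finset.sum_const, nsmul_eq_mul, Finset.card_powersetCard, hEcard]
            rw [Finset.sum_mul]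
            exact Finset.sum_congr rfl fun T _ => by ring
        _ = (2 * ((M.choose n : ℝ) - (((M - 1).choose n : ℕ) : ℝ)) - (M.choose n : ℝ)) *
              ((M.choose n : ℝ) * Real.exp (c * n)) := by
            rw [sum_indicator_powersetCard _ n i hiO, hOcard, Nat.choose_symm hn']
        _ = 1 / (2 * (M : ℝ)) *
              (((4 * n : ℝ) - 2 * M) * (M.choose n : ℝ) ^ 2 * Real.exp (c * n)) := by
            field_simp
            linear_combination (4 * (M.choose n : ℝ)) * hid
    · have hiE : i ∈ (Finset.Icc 1 (2 * M)).filter (fun j => ¬ Odd j) :=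
        Finset.mem_filter.mpr ⟨hi, hodd⟩
      have hi1 : 1 ≤ i := (Finset.mem_Icc.mp hi).1
      have hsign : (-1 : ℝ) ^ (i - 1) = -1 := by
        rw [Nat.not_odd_iff_even] at hodd
        obtain ⟨k, rfl⟩ := hodd
        exact Odd.neg_one_pow ⟨k - 1, by omega⟩
      have hid : (M : ℝ) * (((M - 1).choose (M - n) : ℕ) : ℝ)
          = (n : ℝ) * (M.choose n : ℝ) := by
        exact_mod_cast congrArg (Nat.cast : ℕ → ℝ) (nat_id2 M n hM hn')
      calc ∑ T ∈ ((Finset.Icc 1 (2 * M)).filter (fun j => Odd j)).powersetCard n,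
            ∑ U ∈ ((Finset.Icc 1 (2 * M)).filter (fun j => ¬ Odd j)).powersetCard (M - n),
              ((-1 : ℝ)) ^ (i - 1) * (2 * (if i ∈ T ∪ U then (1 : ℝ) else 0) - 1) *
                Real.exp (c * (((T ∪ U).filter (fun j => Odd j)).card : ℝ))
          = ∑ _T ∈ ((Finset.Icc 1 (2 * M)).filter (fun j => Odd j)).powersetCard n,
            ∑ U ∈ ((Finset.Icc 1 (2 * M)).filter (fun j => ¬ Odd j)).powersetCard (M - n),
              (2 * (if i ∈ U then (1 : ℝ) else 0) - 1) * (-Real.exp (c * n)) := by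
            refine Finset.sum_congr rfl fun T hT => Finset.sum_congr rfl fun U hU => ?_
            obtain ⟨hTsub, hTcard⟩ := Finset.mem_powersetCard.mp hT
            obtain ⟨hUsub, hUcard⟩ := Finset.mem_powersetCard.mp hU
            have hiT : i ∉ T := fun h => hodd (Finset.mem_filter.mp (hTsub h)).2
            rw [hfilter T U hTsub hUsub, hTcard, hsign]
            simp only [Finset.mem_union, hiT, false_or]
            ring
        _ = (M.choose n : ℝ) *
              ((∑ U ∈ ((Finset.Icc 1 (2 * M)).filter (fun j => ¬ Odd j)).powersetCard (M - n),
                (2 * (if i ∈ U then (1 : ℝ) else 0) - 1)) * (-Real.exp (c * n))) := by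
            rw [Finset.sum_const, Finset.card_powersetCard, hOcard, nsmul_eq_mul,
              ← Finset.sum_mul]
        _ = (M.choose n : ℝ) *
              ((2 * ((M.choose (M - n) : ℝ) - (((M - 1).choose (M - n) : ℕ) : ℝ))
                - (M.choose (M - n) : ℝ)) * (-Real.exp (c * n))) := by
            rw [sum_indicator_powersetCard _ (M - n) i hiE, hEcard]
        _ = 1 / (2 * (M : ℝ)) *
              (((4 * n : ℝ) - 2 * M) * (M.choose n : ℝ) ^ 2 * Real.exp (c * n)) := by
            rw [Nat.choose_symm hn']
            field_simp
            linear_combination (4 * (M.choose n : ℝ)) * hid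
  rw [hnum, hden, mul_div_assoc]
end

section
/- The mean-field self-consistency function is odd and strictly bounded by 1: for every even integer N ≥ 2 and every real a, the function F : ℝ → ℝ defined by F(m) = (1/N)·(Σ_{n=0}^{N/2} (4n−N)·C(N/2,n)²·exp(a·m·n)) / (Σ_{n=0}^{N/2} C(N/2,n)²·exp(a·m·n)) satisfies F(−m) = −F(m) and −1 < F(m) < 1 for all real m. -/
open Finset

/-- The mean-field self-consistency function
`F(m) = (1/N)·(Σₙ (4n−N)·C(N/2,n)²·e^{amn}) / (Σₙ C(N/2,n)²·e^{amn})`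
(sums over `0 ≤ n ≤ N/2`) is odd and strictly bounded by `1`:
`F(−m) = −F(m)` and `−1 < F(m) < 1` for all real `m`. -/
theorem mean_field_F_odd_and_bounded (N : ℕ) (hN : 2 ≤ N) (hNe : Even N) (a : ℝ)
    (F : ℝ → ℝ)
    (hF : F = fun m =>
      (1 / (N : ℝ)) *
        ((∑ n ∈ Finset.range (N / 2 + 1),
            ((4 * n : ℝ) - N) * ((N / 2).choose n : ℝ) ^ 2 * Real.exp (a * m * n))
          / (∑ n ∈ Finset.range (N / 2 + 1),
              ((N / 2).choose n : ℝ) ^ 2 * Real.exp (a * m * n)))) :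
    ∀ m : ℝ, F (-m) = -F m ∧ -1 < F m ∧ F m < 1 := by
  subst hF
  intro m
  obtain ⟨t, ht⟩ := hNe
  set K := N / 2 with hK
  have hNK : N = 2 * K := by omega
  have hK1 : 1 ≤ K := by omega
  set c : ℕ → ℝ := fun n => ((K.choose n : ℝ)) ^ 2 with hc
  set D : ℝ → ℝ := fun x => ∑ n ∈ Finset.range (K + 1), c n * Real.exp (a * x * n) with hD
  set S : ℝ → ℝ := fun x =>
    ∑ n ∈ Finset.range (K + 1), ((4 * n : ℝ) - N) * c n * Real.exp (a * x * n) with hS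
  have hcpos : ∀ n ∈ Finset.range (K + 1), 0 < c n := by
    intro n hn
    have hn' : n ≤ K := by simpa [Nat.lt_succ_iff] using hn
    have : 0 < K.choose n := Nat.choose_pos hn'
    positivity
  have hDpos : ∀ x : ℝ, 0 < D x := by
    intro x
    apply Finset.sum_pos'
    · intro n hn
      have := (hcpos n hn).le
      positivity
    · refine ⟨0, Finset.mem_range.2 (by omega), ?_⟩
      have := hcpos 0 (Finset.mem_range.2 (by omega))
      positivity
  have hrefl : ∀ f : ℕ → ℝ,
      ∑ n ∈ Finset.range (K + 1), f n = ∑ n ∈ Finset.range (K + 1), f (K - n) := by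
    intro f
    exact (Finset.sum_range_reflect f (K + 1)).symm
  have hDrefl : D (-m) = Real.exp (-(a * m * K)) * D m := by
    rw [hD]
    simp only
    rw [hrefl (fun n => c n * Real.exp (a * (-m) * n)), Finset.mul_sum]
    apply Finset.sum_congr rfl
    intro n hn
    have hn' : n ≤ K := by simpa [Nat.lt_succ_iff] using Finset.mem_range.1 hn
    have hcast : ((K - n : ℕ) : ℝ) = (K : ℝ) - n := by
      push_cast [Nat.cast_sub hn']; ring
    have hchoose : K.choose (K - n) = K.choose n := Nat.choose_symm hn'
    rw [hc]
    simp only [hchoose, hcast]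
    rw [show a * (-m) * ((K:ℝ) - n) = -(a * m * K) + a * m * n from by ring, Real.exp_add]
    ring
  have hSrefl : S (-m) = Real.exp (-(a * m * K)) * (-S m) := by
    rw [hS]
    simp only
    rw [hrefl (fun n => ((4 * n : ℝ) - N) * c n * Real.exp (a * (-m) * n))]
    have hsum : Real.exp (-(a * m * K)) *
        (-(∑ n ∈ Finset.range (K + 1), ((4 * n : ℝ) - N) * c n * Real.exp (a * m * n)))
        = ∑ n ∈ Finset.range (K + 1),
            Real.exp (-(a * m * K)) * (-(((4 * n : ℝ) - N) * c n * Real.exp (a * m * n))) := by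
      rw [← Finset.sum_neg_distrib, Finset.mul_sum]
    rw [hsum]
    apply Finset.sum_congr rfl
    intro n hn
    have hn' : n ≤ K := by simpa [Nat.lt_succ_iff] using Finset.mem_range.1 hn
    have hcast : ((K - n : ℕ) : ℝ) = (K : ℝ) - n := by
      push_cast [Nat.cast_sub hn']; ring
    have hchoose : K.choose (K - n) = K.choose n := Nat.choose_symm hn'
    have hNr : (N : ℝ) = 2 * K := by exact_mod_cast congrArg (Nat.cast (R := ℝ)) hNK
    rw [hc]
    simp only [hchoose, hcast, hNr]
    rw [show a * (-m) * ((K:ℝ) - n) = -(a * m * K) + a * m * n from by ring, Real.exp_add]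
    ring
  have hNpos : (0 : ℝ) < N := by positivity
  have key : ∀ x : ℝ, -1 < 1 / (N : ℝ) * (S x / D x) ∧ 1 / (N : ℝ) * (S x / D x) < 1 := by
    intro x
    have hDx := hDpos x
    have hupper : S x < N * D x := by
      rw [hS, hD, Finset.mul_sum]
      apply Finset.sum_lt_sum
      · intro n hn
        have hn' : n ≤ K := by simpa [Nat.lt_succ_iff] using Finset.mem_range.1 hn
        have h1 : (4 * n : ℝ) - N ≤ N := by
          have : (n : ℝ) ≤ K := by exact_mod_cast hn'
          have hNr : (N : ℝ) = 2 * K := by exact_mod_cast congrArg (Nat.cast (R := ℝ)) hNK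
          linarith
        have h2 : 0 ≤ c n * Real.exp (a * x * n) := by
          have := (hcpos n hn).le; positivity
        calc ((4 * n : ℝ) - N) * c n * Real.exp (a * x * n)
            = ((4 * n : ℝ) - N) * (c n * Real.exp (a * x * n)) := by ring
          _ ≤ N * (c n * Real.exp (a * x * n)) := mul_le_mul_of_nonneg_right h1 h2
          _ = N * (c n * Real.exp (a * x * n)) := rfl
      · refine ⟨0, Finset.mem_range.2 (by omega), ?_⟩
        have h2 : 0 < c 0 * Real.exp (a * x * 0) := by
          have := hcpos 0 (Finset.mem_range.2 (by omega)); positivity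
        have h1 : (4 * (0:ℕ) : ℝ) - N < N := by push_cast; linarith
        calc ((4 * (0:ℕ) : ℝ) - N) * c 0 * Real.exp (a * x * (0:ℕ))
            = ((4 * (0:ℕ) : ℝ) - N) * (c 0 * Real.exp (a * x * (0:ℕ))) := by ring
          _ < N * (c 0 * Real.exp (a * x * (0:ℕ))) := by
              apply mul_lt_mul_of_pos_right h1
              simpa using h2
          _ = N * (c 0 * Real.exp (a * x * (0:ℕ))) := rfl
    have hlower : -(N * D x) < S x := by
      have hneg : -((N:ℝ) * D x)
          = ∑ n ∈ Finset.range (K + 1), (-(N:ℝ)) * (c n * Real.exp (a * x * n)) := by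
        rw [hD]
        simp only [Finset.mul_sum, ← Finset.sum_neg_distrib]
        apply Finset.sum_congr rfl; intro n _; ring
      rw [hneg, hS]
      simp only
      apply Finset.sum_lt_sum
      · intro n hn
        have h1 : -(N : ℝ) ≤ (4 * n : ℝ) - N := by
          have : (0:ℝ) ≤ (n:ℝ) := Nat.cast_nonneg n
          linarith
        have h2 : 0 ≤ c n * Real.exp (a * x * n) := by
          have := (hcpos n hn).le; positivity
        calc (-(N:ℝ)) * (c n * Real.exp (a * x * n))
            ≤ ((4 * n : ℝ) - N) * (c n * Real.exp (a * x * n)) :=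
              mul_le_mul_of_nonneg_right h1 h2
          _ = ((4 * n : ℝ) - N) * c n * Real.exp (a * x * n) := by ring
      · refine ⟨K, Finset.mem_range.2 (by omega), ?_⟩
        have h2 : 0 < c K * Real.exp (a * x * K) := by
          have := hcpos K (Finset.mem_range.2 (by omega)); positivity
        have hNr : (N : ℝ) = 2 * K := by exact_mod_cast congrArg (Nat.cast (R := ℝ)) hNK
        have h1 : -(N : ℝ) < (4 * K : ℝ) - N := by
          have : (1:ℝ) ≤ K := by exact_mod_cast hK1
          rw [hNr]; linarith
        calc (-(N:ℝ)) * (c K * Real.exp (a * x * K))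
            < ((4 * K : ℝ) - N) * (c K * Real.exp (a * x * K)) :=
              mul_lt_mul_of_pos_right h1 h2
          _ = ((4 * K : ℝ) - N) * c K * Real.exp (a * x * K) := by ring
    have hrw : 1 / (N : ℝ) * (S x / D x) = S x / (N * D x) := by
      field_simp
    rw [hrw]
    constructor
    · rw [neg_lt, ← neg_div, div_lt_one (by positivity)]
      linarith
    · rw [div_lt_one (by positivity)]; exact hupper
  refine ⟨?_, (key m).1, (key m).2⟩
  show (1 / (N : ℝ)) * (S (-m) / D (-m)) = -((1 / (N : ℝ)) * (S m / D m))
  have hE : Real.exp (-(a * m * K)) ≠ 0 := Real.exp_ne_zero _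
  rw [hSrefl, hDrefl, mul_div_mul_left _ _ hE]
  ring
end

section
/- Existence of spontaneous spatial translation symmetry breaking in mean field: let N ≥ 2 be an even integer, a > 0 a real number, and define F : ℝ → ℝ by F(m) = (1/N)·(Σ_{n=0}^{N/2} (4n−N)·C(N/2,n)²·exp(a·m·n)) / (Σ_{n=0}^{N/2} C(N/2,n)²·exp(a·m·n)). If (a/(4N))·(Σ_{n=0}^{N/2} (4n−N)²·C(N/2,n)²) / (Σ_{n=0}^{N/2} C(N/2,n)²) > 1, then there exists m with 0 < m < 1 and F(m) = m (and by oddness −m is also a solution); i.e., the self-consistent equation has nonzero solutions. -/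
open Finset

lemma mf_sum_reflect_zero (K : ℕ) :
    ∑ n ∈ Finset.range (K+1), ((4*n:ℝ) - 2*K) * (K.choose n:ℝ)^2 = 0 := by
  have h := Finset.sum_range_reflect (fun n => ((4*n:ℝ) - 2*K) * (K.choose n:ℝ)^2) (K+1)
  have h2 : ∑ j ∈ Finset.range (K+1),
      ((4*((K+1-1-j:ℕ)):ℝ) - 2*K) * (K.choose (K+1-1-j):ℝ)^2
      = ∑ j ∈ Finset.range (K+1), -(((4*j:ℝ) - 2*K) * (K.choose j:ℝ)^2) := by
    apply Finset.sum_congr rfl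
    intro j hj
    have hj' : j ≤ K := Nat.lt_succ_iff.mp (Finset.mem_range.mp hj)
    have e1 : K + 1 - 1 - j = K - j := by omega
    rw [e1, Nat.choose_symm hj', Nat.cast_sub hj']
    ring
  rw [h2, Finset.sum_neg_distrib] at h
  linarith

lemma mf_hasDerivAt (K : ℕ) (a : ℝ) (c : ℕ → ℝ) (m : ℝ) :
    HasDerivAt (fun x => ∑ n ∈ Finset.range (K+1), c n * Real.exp (a*x*n))
      (∑ n ∈ Finset.range (K+1), c n * (Real.exp (a*m*n) * (a*n))) m := by
  apply HasDerivAt.fun_sum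
  intro n _
  have h1 : HasDerivAt (fun x : ℝ => a*x*n) (a*n) m := by
    simpa using ((hasDerivAt_id m).const_mul a).mul_const (n:ℝ)
  exact (h1.exp).const_mul (c n)

/-- Existence of spontaneous spatial translation symmetry breaking in mean field:
if the slope criterion
`(a/(4N))·(Σₙ (4n−N)²·C(N/2,n)²)/(Σₙ C(N/2,n)²) > 1` holds, then the self-consistent
equation `m = F(m)` for
`F(m) = (1/N)·(Σₙ (4n−N)·C(N/2,n)²·e^{amn}) / (Σₙ C(N/2,n)²·e^{amn})`
has a solution with `0 < m < 1` (and, by oddness, `−m` is also a solution). -/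
theorem mean_field_ssb_exists_nonzero_solution (N : ℕ) (hN : 2 ≤ N) (hNe : Even N)
    (a : ℝ) (ha : 0 < a)
    (F : ℝ → ℝ)
    (hF : F = fun m =>
      (1 / (N : ℝ)) *
        ((∑ n ∈ Finset.range (N / 2 + 1),
            ((4 * n : ℝ) - N) * ((N / 2).choose n : ℝ) ^ 2 * Real.exp (a * m * n))
          / (∑ n ∈ Finset.range (N / 2 + 1),
              ((N / 2).choose n : ℝ) ^ 2 * Real.exp (a * m * n))))
    (hslope : (a / (4 * N : ℝ)) *
        ((∑ n ∈ Finset.range (N / 2 + 1),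
            ((4 * n : ℝ) - N) ^ 2 * ((N / 2).choose n : ℝ) ^ 2)
          / (∑ n ∈ Finset.range (N / 2 + 1), ((N / 2).choose n : ℝ) ^ 2)) > 1) :
    ∃ m : ℝ, 0 < m ∧ m < 1 ∧ F m = m ∧ F (-m) = -m := by
  classical
  set K := N / 2 with hK
  obtain ⟨k, hk⟩ := hNe
  have hNK : N = 2 * K := by omega
  have hKpos : 1 ≤ K := by omega
  have hNR : (N : ℝ) = 2 * K := by rw [hNK]; push_cast; ring
  have hNpos : (0:ℝ) < N := by exact_mod_cast (by omega : 0 < N)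
  have hN0 : (N:ℝ) ≠ 0 := ne_of_gt hNpos
  -- the numerator and denominator functions
  set Num : ℝ → ℝ := fun m => ∑ n ∈ Finset.range (K+1),
    (((4*n:ℝ) - N) * (K.choose n:ℝ)^2) * Real.exp (a*m*n) with hNum
  set Den : ℝ → ℝ := fun m => ∑ n ∈ Finset.range (K+1),
    ((K.choose n:ℝ)^2) * Real.exp (a*m*n) with hDen
  have hFeq : ∀ m, F m = (1/(N:ℝ)) * (Num m / Den m) := by
    intro m
    rw [hF]
  have hDenpos : ∀ m, 0 < Den m := by
    intro m
    apply Finset.sum_pos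
    · intro n hn
      have hn' : n ≤ K := Nat.lt_succ_iff.mp (Finset.mem_range.mp hn)
      have := Nat.choose_pos hn'
      positivity
    · exact Finset.nonempty_range_add_one
  -- zero-sum identity
  have hzero : ∑ n ∈ Finset.range (K+1), ((4*n:ℝ) - N) * (K.choose n:ℝ)^2 = 0 := by
    rw [hNR] at *
    exact mf_sum_reflect_zero K
  -- H and its derivative at 0
  set H : ℝ → ℝ := fun m => Num m - (N:ℝ) * m * Den m with hH
  have hNumD : ∀ m, HasDerivAt Num (∑ n ∈ Finset.range (K+1),
      (((4*n:ℝ) - N) * (K.choose n:ℝ)^2) * (Real.exp (a*m*n) * (a*n))) m :=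
    fun m => mf_hasDerivAt K a _ m
  have hDenD : ∀ m, HasDerivAt Den (∑ n ∈ Finset.range (K+1),
      ((K.choose n:ℝ)^2) * (Real.exp (a*m*n) * (a*n))) m :=
    fun m => mf_hasDerivAt K a _ m
  have hHcont : Continuous H := by
    apply Continuous.sub
    · exact continuous_iff_continuousAt.mpr fun m => (hNumD m).continuousAt
    · exact Continuous.mul (continuous_const.mul continuous_id)
        (continuous_iff_continuousAt.mpr fun m => (hDenD m).continuousAt)
  have hH0val : H 0 = 0 := by
    simp only [hH, hNum]
    have : ∀ n ∈ Finset.range (K+1),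
        (((4*n:ℝ) - N) * (K.choose n:ℝ)^2) * Real.exp (a*0*n)
        = ((4*n:ℝ) - N) * (K.choose n:ℝ)^2 := by
      intro n _
      rw [mul_zero, zero_mul, Real.exp_zero, mul_one]
    rw [Finset.sum_congr rfl this, hzero]
    ring
  -- derivative of H at 0
  set d : ℝ := (∑ n ∈ Finset.range (K+1),
      (((4*n:ℝ) - N) * (K.choose n:ℝ)^2) * (Real.exp (a*0*n) * (a*n)))
      - (N:ℝ) * Den 0 with hd
  have hHD0 : HasDerivAt H d 0 := by
    have hlin : HasDerivAt (fun x : ℝ => (N:ℝ) * x) (N:ℝ) 0 := by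
      simpa using (hasDerivAt_id (0:ℝ)).const_mul (N:ℝ)
    have := (hNumD 0).sub (hlin.mul (hDenD 0))
    have h2 : HasDerivAt H _ 0 := this
    exact h2.congr_deriv (by rw [hd]; ring)
  -- d > 0 from the slope hypothesis
  set S2 : ℝ := ∑ n ∈ Finset.range (K+1), ((4*n:ℝ) - N)^2 * (K.choose n:ℝ)^2 with hS2
  set S0 : ℝ := ∑ n ∈ Finset.range (K+1), (K.choose n:ℝ)^2 with hS0
  have hS0pos : 0 < S0 := by
    apply Finset.sum_pos
    · intro n hn
      have hn' : n ≤ K := Nat.lt_succ_iff.mp (Finset.mem_range.mp hn)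
      have := Nat.choose_pos hn'
      positivity
    · exact Finset.nonempty_range_add_one
  have hDen0 : Den 0 = S0 := by
    simp only [hDen, hS0]
    apply Finset.sum_congr rfl
    intro n _
    rw [mul_zero, zero_mul, Real.exp_zero, mul_one]
  have hNumD0 : (∑ n ∈ Finset.range (K+1),
      (((4*n:ℝ) - N) * (K.choose n:ℝ)^2) * (Real.exp (a*0*n) * (a*n))) = (a/4) * S2 := by
    have h1 : ∀ n ∈ Finset.range (K+1),
        (((4*n:ℝ) - N) * (K.choose n:ℝ)^2) * (Real.exp (a*0*n) * (a*n))
        = (a/4) * (((4*n:ℝ) - N)^2 * (K.choose n:ℝ)^2)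
          + (a/4*N) * (((4*n:ℝ) - N) * (K.choose n:ℝ)^2) := by
      intro n _
      rw [mul_zero, zero_mul, Real.exp_zero, one_mul]
      ring
    rw [Finset.sum_congr rfl h1, Finset.sum_add_distrib, ← Finset.mul_sum, ← Finset.mul_sum,
      hzero, mul_zero, add_zero, hS2]
  have hdpos : 0 < d := by
    have key : a * S2 > 4 * (N:ℝ) * S0 := by
      have h1 : a / (4 * (N:ℝ)) * (S2 / S0) = (a * S2) / (4 * (N:ℝ) * S0) := by
        field_simp
      rw [h1] at hslope
      have h2 : 0 < 4 * (N:ℝ) * S0 := by positivity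
      exact (one_lt_div h2).mp hslope
    rw [hd, hNumD0, hDen0]
    linarith
  -- find x0 ∈ (0,1) with H x0 > 0
  have hslopet := hasDerivAt_iff_tendsto_slope.mp hHD0
  have hev : ∀ᶠ x in nhdsWithin 0 {(0:ℝ)}ᶜ, 0 < slope H 0 x :=
    hslopet.eventually (eventually_gt_nhds hdpos)
  have hmono : nhdsWithin (0:ℝ) (Set.Ioi 0) ≤ nhdsWithin 0 {(0:ℝ)}ᶜ :=
    nhdsWithin_mono 0 (fun x hx => ne_of_gt hx)
  have hev' : ∀ᶠ x in nhdsWithin (0:ℝ) (Set.Ioi 0), 0 < slope H 0 x := hev.filter_mono hmono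
  have hlt1 : ∀ᶠ x in nhdsWithin (0:ℝ) (Set.Ioi 0), x < 1 ∧ 0 < x := by
    have hIoo : Set.Ioo (0:ℝ) 1 ∈ nhdsWithin (0:ℝ) (Set.Ioi 0) :=
      Ioo_mem_nhdsGT_of_mem ⟨le_refl 0, one_pos⟩
    filter_upwards [hIoo] with x hx
    exact ⟨hx.2, hx.1⟩
  obtain ⟨x0, hx0slope, hx0lt1, hx0pos⟩ := (hev'.and hlt1).exists
  have hHx0 : 0 < H x0 := by
    rw [slope_def_field, hH0val, sub_zero, sub_zero] at hx0slope
    have := mul_pos hx0slope hx0pos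
    rwa [div_mul_cancel₀ _ (ne_of_gt hx0pos)] at this
  -- H 1 < 0
  have hH1 : H 1 < 0 := by
    have hlt : Num 1 < (N:ℝ) * 1 * Den 1 := by
      rw [mul_one, hDen, Finset.mul_sum]
      apply Finset.sum_lt_sum
      · intro n hn
        have hn' : n ≤ K := Nat.lt_succ_iff.mp (Finset.mem_range.mp hn)
        have hle : ((4*n:ℝ) - N) ≤ (N:ℝ) := by
          have : (n:ℝ) ≤ K := by exact_mod_cast hn'
          rw [hNR]; linarith
        have hnn : 0 ≤ (K.choose n:ℝ)^2 * Real.exp (a*1*n) := by positivity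
        calc (((4*n:ℝ) - N) * (K.choose n:ℝ)^2) * Real.exp (a*1*n)
            = ((4*n:ℝ) - N) * ((K.choose n:ℝ)^2 * Real.exp (a*1*n)) := by ring
          _ ≤ (N:ℝ) * ((K.choose n:ℝ)^2 * Real.exp (a*1*n)) :=
              mul_le_mul_of_nonneg_right hle hnn
      · refine ⟨0, Finset.mem_range.mpr (by omega), ?_⟩
        simp only [Nat.cast_zero, mul_zero, Real.exp_zero, Nat.choose_zero_right,
          Nat.cast_one, one_pow, zero_sub]
        nlinarith [hNpos]
    rw [hH]
    simp only
    linarith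
  -- IVT
  have hsub : Set.Ioo (H 1) (H x0) ⊆ H '' Set.Ioo x0 1 :=
    intermediate_value_Ioo' (le_of_lt hx0lt1) hHcont.continuousOn
  obtain ⟨m, hmIoo, hHm⟩ := hsub ⟨hH1, hHx0⟩
  have hmpos : 0 < m := lt_trans hx0pos hmIoo.1
  have hmlt1 : m < 1 := hmIoo.2
  have hNumm : Num m = (N:ℝ) * m * Den m := by
    have : Num m - (N:ℝ) * m * Den m = 0 := hHm
    linarith
  refine ⟨m, hmpos, hmlt1, ?_, ?_⟩
  · rw [hFeq, hNumm]
    field_simp [ne_of_gt (hDenpos m)]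
  · -- oddness
    have hodd : ∀ x : ℝ, F (-x) = - F x := by
      intro x
      have hnumref : Num (-x) = -(Real.exp (a*(-x)*K) * Num x) := by
        simp only [hNum]
        rw [← Finset.sum_range_reflect (fun n => (((4*n:ℝ) - N) * (K.choose n:ℝ)^2)
          * Real.exp (a*(-x)*n)) (K+1)]
        rw [Finset.mul_sum, ← Finset.sum_neg_distrib]
        apply Finset.sum_congr rfl
        intro j hj
        have hj' : j ≤ K := Nat.lt_succ_iff.mp (Finset.mem_range.mp hj)
        have e1 : K + 1 - 1 - j = K - j := by omega
        simp only [e1]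
        rw [Nat.choose_symm hj', Nat.cast_sub hj']
        have e2 : a*(-x)*((K:ℝ) - j) = (a*(-x)*K) + (a*x*j) := by ring
        rw [e2, Real.exp_add, hNR]
        ring
      have hdenref : Den (-x) = Real.exp (a*(-x)*K) * Den x := by
        simp only [hDen]
        rw [← Finset.sum_range_reflect (fun n => ((K.choose n:ℝ)^2)
          * Real.exp (a*(-x)*n)) (K+1)]
        rw [Finset.mul_sum]
        apply Finset.sum_congr rfl
        intro j hj
        have hj' : j ≤ K := Nat.lt_succ_iff.mp (Finset.mem_range.mp hj)
        have e1 : K + 1 - 1 - j = K - j := by omega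
        simp only [e1]
        rw [Nat.choose_symm hj', Nat.cast_sub hj']
        have e2 : a*(-x)*((K:ℝ) - j) = (a*(-x)*K) + (a*x*j) := by ring
        rw [e2, Real.exp_add]
        ring
      rw [hFeq, hFeq, hnumref, hdenref, neg_div, mul_div_mul_left _ _ (Real.exp_ne_zero _)]
      ring
    have hFm : F m = m := by
      rw [hFeq, hNumm]
      field_simp [ne_of_gt (hDenpos m)]
    rw [hodd, hFm]
end

section
/- The slope of the mean-field self-consistency function at the origin: for every even integer N ≥ 2 and real a, the function F(m) = (1/N)·(Σ_{n=0}^{N/2} (4n−N)·C(N/2,n)²·exp(a·m·n)) / (Σ_{n=0}^{N/2} C(N/2,n)²·exp(a·m·n)) satisfies F(0) = 0, is differentiable at 0, and F′(0) = (a/(4N))·(Σ_{n=0}^{N/2} (4n−N)²·C(N/2,n)²) / (Σ_{n=0}^{N/2} C(N/2,n)²); in particular Σ_{n=0}^{N/2} (4n−N)·C(N/2,n)² = 0. -/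
open Finset

lemma key_sum_zero (M : ℕ) :
    ∑ n ∈ Finset.range (M + 1), ((4 * n : ℤ) - 2 * M) * (M.choose n : ℤ) ^ 2 = 0 := by
  have h := Finset.sum_range_reflect
    (fun n => ((4 * n : ℤ) - 2 * M) * (M.choose n : ℤ) ^ 2) (M + 1)
  have h2 : ∀ j ∈ Finset.range (M + 1),
      ((4 * ((M + 1 - 1 - j : ℕ)) : ℤ) - 2 * M) * (M.choose (M + 1 - 1 - j) : ℤ) ^ 2
      = -(((4 * j : ℤ) - 2 * M) * (M.choose j : ℤ) ^ 2) := by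
    intro j hj
    simp only [Finset.mem_range] at hj
    have hj' : j ≤ M := by omega
    have e1 : M + 1 - 1 - j = M - j := by omega
    rw [e1, Nat.choose_symm hj']
    have : ((M - j : ℕ) : ℤ) = (M : ℤ) - j := by
      push_cast [Nat.cast_sub hj']; ring
    rw [this]; ring
  rw [Finset.sum_congr rfl h2, Finset.sum_neg_distrib] at h
  linarith

/-- The slope of the mean-field self-consistency function at the origin: for
`F(m) = (1/N)·(Σₙ (4n−N)·C(N/2,n)²·e^{amn}) / (Σₙ C(N/2,n)²·e^{amn})`
(sums over `0 ≤ n ≤ N/2`), one has `F(0) = 0`, `F` is differentiable at `0` with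
`F′(0) = (a/(4N))·(Σₙ (4n−N)²·C(N/2,n)²)/(Σₙ C(N/2,n)²)`; in particular
`Σₙ (4n−N)·C(N/2,n)² = 0`. -/
theorem mean_field_F_deriv_at_zero (N : ℕ) (hN : 2 ≤ N) (hNe : Even N) (a : ℝ)
    (F : ℝ → ℝ)
    (hF : F = fun m =>
      (1 / (N : ℝ)) *
        ((∑ n ∈ Finset.range (N / 2 + 1),
            ((4 * n : ℝ) - N) * ((N / 2).choose n : ℝ) ^ 2 * Real.exp (a * m * n))
          / (∑ n ∈ Finset.range (N / 2 + 1),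
              ((N / 2).choose n : ℝ) ^ 2 * Real.exp (a * m * n)))) :
    F 0 = 0 ∧
    HasDerivAt F
      ((a / (4 * N : ℝ)) *
        ((∑ n ∈ Finset.range (N / 2 + 1),
            ((4 * n : ℝ) - N) ^ 2 * ((N / 2).choose n : ℝ) ^ 2)
          / (∑ n ∈ Finset.range (N / 2 + 1), ((N / 2).choose n : ℝ) ^ 2))) 0 ∧
    (∑ n ∈ Finset.range (N / 2 + 1),
        ((4 * n : ℤ) - N) * ((N / 2).choose n : ℤ) ^ 2) = 0 := by
  set M := N / 2 with hMdef
  have hM : N = 2 * M := by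
    obtain ⟨k, hk⟩ := hNe; omega
  have hNR : (N : ℝ) = 2 * M := by rw [hM]; push_cast; ring
  -- integer sum is zero
  have keyZ : ∑ n ∈ Finset.range (M + 1), ((4 * n : ℤ) - N) * (M.choose n : ℤ) ^ 2 = 0 := by
    have := key_sum_zero M
    have hNZ : (N : ℤ) = 2 * M := by rw [hM]; push_cast; ring
    rw [hNZ]; exact this
  -- real sum is zero
  have keyR : ∑ n ∈ Finset.range (M + 1), ((4 * n : ℝ) - N) * (M.choose n : ℝ) ^ 2 = 0 := by
    have := congrArg (fun z : ℤ => (z : ℝ)) keyZ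
    push_cast at this
    convert this using 2 with n
  -- denominator at 0
  set S2 : ℝ := ∑ n ∈ Finset.range (M + 1), (M.choose n : ℝ) ^ 2 with hS2
  have hS2pos : 0 < S2 := by
    apply Finset.sum_pos
    · intro n hn
      have : 0 < M.choose n := Nat.choose_pos (by simpa [Finset.mem_range, Nat.lt_succ_iff] using hn)
      positivity
    · exact ⟨0, Finset.mem_range.mpr (Nat.succ_pos _)⟩
  have hS2ne : S2 ≠ 0 := ne_of_gt hS2pos
  -- numerator and denominator functions
  set g : ℝ → ℝ := fun m => ∑ n ∈ Finset.range (M + 1),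
    ((4 * n : ℝ) - N) * (M.choose n : ℝ) ^ 2 * Real.exp (a * m * n) with hg
  set h : ℝ → ℝ := fun m => ∑ n ∈ Finset.range (M + 1),
    (M.choose n : ℝ) ^ 2 * Real.exp (a * m * n) with hh
  have hg0 : g 0 = 0 := by
    simp only [hg, mul_zero, zero_mul, Real.exp_zero, mul_one]
    simpa using keyR
  have hh0 : h 0 = S2 := by
    simp [hh, hS2]
  -- derivatives
  have hexp : ∀ n : ℕ, HasDerivAt (fun m : ℝ => Real.exp (a * m * n)) (a * n) 0 := by
    intro n
    have h1 : HasDerivAt (fun m : ℝ => a * m * n) (a * n) 0 := by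
      simpa using ((hasDerivAt_id (0:ℝ)).const_mul a).mul_const (n : ℝ)
    have := h1.exp
    simpa using this
  have hg' : HasDerivAt g (∑ n ∈ Finset.range (M + 1),
      ((4 * n : ℝ) - N) * (M.choose n : ℝ) ^ 2 * (a * n)) 0 := by
    apply HasDerivAt.fun_sum
    intro n hn
    exact (hexp n).const_mul _
  have hh' : HasDerivAt h (∑ n ∈ Finset.range (M + 1),
      (M.choose n : ℝ) ^ 2 * (a * n)) 0 := by
    apply HasDerivAt.fun_sum
    intro n hn
    exact (hexp n).const_mul _
  -- value of g'(0)
  set SA : ℝ := ∑ n ∈ Finset.range (M + 1), ((4 * n : ℝ) - N) ^ 2 * (M.choose n : ℝ) ^ 2 with hSA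
  have hg'val : (∑ n ∈ Finset.range (M + 1),
      ((4 * n : ℝ) - N) * (M.choose n : ℝ) ^ 2 * (a * n)) = (a / 4) * SA := by
    have hsplit : ∀ n ∈ Finset.range (M + 1),
        ((4 * n : ℝ) - N) * (M.choose n : ℝ) ^ 2 * (a * n)
        = (a / 4) * (((4 * n : ℝ) - N) ^ 2 * (M.choose n : ℝ) ^ 2)
          + (a * N / 4) * (((4 * n : ℝ) - N) * (M.choose n : ℝ) ^ 2) := by
      intro n _; ring
    rw [Finset.sum_congr rfl hsplit, Finset.sum_add_distrib, ← Finset.mul_sum, ← Finset.mul_sum,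
      keyR, hSA]
    ring
  -- assemble
  have hFdiv : HasDerivAt (fun m => g m / h m)
      (((a / 4) * SA * h 0 - g 0 * (∑ n ∈ Finset.range (M + 1),
        (M.choose n : ℝ) ^ 2 * (a * n))) / (h 0) ^ 2) 0 := by
    rw [← hg'val]
    exact hg'.div hh' (by rw [hh0]; exact hS2ne)
  rw [hg0, hh0] at hFdiv
  have hFeq : F = fun m => (1 / (N : ℝ)) * (g m / h m) := by
    rw [hF]
  have hNne : (N : ℝ) ≠ 0 := by positivity
  refine ⟨?_, ?_, ?_⟩
  · rw [hFeq]; simp [hg0]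
  · have := hFdiv.const_mul (1 / (N : ℝ))
    rw [hFeq]
    convert this using 1
    case e'_4 => rfl
    case e'_5 => rfl
    field_simp
    ring
  · simpa [hMdef] using keyZ
end
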